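/- arXiv:2505.19183 — 2 statements merged into one kernel-verified Lean document; each statement's English description precedes it below -/
import Mathlib

section
/- Assume λ₂(L) > 0 (the empirical graph is connected) and λ̄_min > 0 (the average (1/n) Σᵢ Q⁽ⁱ⁾ of the local matrices is non-singular). Then the matrix Q = diag(Q⁽¹⁾,…,Q⁽ⁿ⁾) + α (L ⊗ I_d) is invertible and its smallest eigenvalue satisfies λ₁(Q) ≥ (1/(1+ρ²)) · min{ λ₂(L) · α · ρ², λ̄_min/2 }, where ρ = λ̄_min/(4 λ_max). -/
open Matrix Finset
open scoped RealInnerProductSpace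
open scoped Kronecker

noncomputable section

/-- The Laplacian matrix of the empirical graph with edge-weight matrix `A`. -/
def lap {n : ℕ} (A : Matrix (Fin n) (Fin n) ℝ) : Matrix (Fin n) (Fin n) ℝ :=
  Matrix.of fun i j => if i = j then ∑ k ∈ Finset.univ.erase i, A i k else -A i j

/-- The eigenvalues of a real symmetric matrix, in arbitrary order
(junk value `0` if the matrix is not symmetric). -/
def matEigs {ι : Type*} [Fintype ι] [DecidableEq ι] (M : Matrix ι ι ℝ) : ι → ℝ :=
  @dite _ M.IsHermitian (Classical.dec _) (fun h => h.eigenvalues) (fun _ => 0)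

/-- The smallest eigenvalue of a real symmetric matrix. -/
def lamMin {ι : Type*} [Fintype ι] [DecidableEq ι] (M : Matrix ι ι ℝ) : ℝ :=
  ⨅ k, matEigs M k

/-- The largest eigenvalue of a real symmetric matrix. -/
def lamMax {ι : Type*} [Fintype ι] [DecidableEq ι] (M : Matrix ι ι ℝ) : ℝ :=
  ⨆ k, matEigs M k

/-- The eigenvalues of a real symmetric matrix, sorted in ascending order. -/
def sortedEigs {ι : Type*} [Fintype ι] [DecidableEq ι] (M : Matrix ι ι ℝ) :
    Fin (Fintype.card ι) → ℝ := fun k =>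
  matEigs (Matrix.reindex (Fintype.equivFin ι) (Fintype.equivFin ι) M)
    (Tuple.sort (matEigs (Matrix.reindex (Fintype.equivFin ι) (Fintype.equivFin ι) M)) k)

/-- The second-smallest eigenvalue `λ₂` of a real symmetric matrix
(junk value `0` for matrices of size `< 2`). -/
def eigTwo {ι : Type*} [Fintype ι] [DecidableEq ι] (M : Matrix ι ι ℝ) : ℝ :=
  if h : 1 < Fintype.card ι then sortedEigs M ⟨1, h⟩ else 0

/-- The GTVMin objective for local linear models: the sum of the local average squared-error
losses plus `α` times the GTV, the latter being a sum over unordered pairs of nodes. -/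
def gtvObj {n d : ℕ} (A : Matrix (Fin n) (Fin n) ℝ) (m : Fin n → ℕ)
    (X : (i : Fin n) → Matrix (Fin (m i)) (Fin d) ℝ)
    (y : (i : Fin n) → EuclideanSpace ℝ (Fin (m i)))
    (α : ℝ) (w : Fin n → EuclideanSpace ℝ (Fin d)) : ℝ :=
  (∑ i, (1 / (m i : ℝ)) * ‖y i - Matrix.toEuclideanLin (X i) (w i)‖ ^ 2) +
    α * ∑ p ∈ Finset.univ.filter (fun p : Fin n × Fin n => p.1 < p.2),
      A p.1 p.2 * ‖w p.1 - w p.2‖ ^ 2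

/-- The block-diagonal matrix `diag(Q⁽¹⁾,…,Q⁽ⁿ⁾)`. -/
def blockDiag {n d : ℕ} (Qb : Fin n → Matrix (Fin d) (Fin d) ℝ) :
    Matrix (Fin n × Fin d) (Fin n × Fin d) ℝ :=
  Matrix.of fun p q => if p.1 = q.1 then Qb p.1 p.2 q.2 else 0


namespace Scratch
set_option linter.unusedSectionVars false
variable {ι : Type*} [Fintype ι] [DecidableEq ι] {M : Matrix ι ι ℝ}

lemma inner_dot (x y : EuclideanSpace ℝ ι) : ⟪x, y⟫ = (x : ι → ℝ) ⬝ᵥ (y : ι → ℝ) := by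
  simp [EuclideanSpace.inner_eq_star_dotProduct, dotProduct, mul_comm]

/-- coordinates of x in the eigenbasis -/
def co (h : M.IsHermitian) (x : ι → ℝ) (j : ι) : ℝ := (h.eigenvectorBasis j : ι → ℝ) ⬝ᵥ x

lemma bilin_eq (h : M.IsHermitian) (x y : ι → ℝ) :
    x ⬝ᵥ M *ᵥ y = ∑ j, h.eigenvalues j * (co h x j * co h y j) := by
  have hb := h.eigenvectorBasis.sum_inner_mul_inner (WithLp.toLp 2 x : EuclideanSpace ℝ ι)
      (WithLp.toLp 2 (M *ᵥ y) : EuclideanSpace ℝ ι)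
  simp only [inner_dot, WithLp.ofLp_toLp] at hb
  rw [show x ⬝ᵥ M *ᵥ y = x ⬝ᵥ (M *ᵥ y) from rfl, ← hb]
  refine Finset.sum_congr rfl fun j _ => ?_
  have h1 : (h.eigenvectorBasis j : ι → ℝ) ⬝ᵥ (M *ᵥ y) = h.eigenvalues j * co h y j := by
    rw [dotProduct_mulVec, ← mulVec_transpose]
    have hMt : Mᵀ = M := by
      have := h.eq; rwa [conjTranspose_eq_transpose_of_trivial] at this
    rw [hMt]; erw [h.mulVec_eigenvectorBasis]; rw [smul_dotProduct, smul_eq_mul]; rfl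
  rw [show (x : ι → ℝ) ⬝ᵥ (h.eigenvectorBasis j : ι → ℝ) = co h x j from dotProduct_comm _ _, h1]
  ring

lemma dot_eq (h : M.IsHermitian) (x y : ι → ℝ) :
    x ⬝ᵥ y = ∑ j, co h x j * co h y j := by
  have hb := h.eigenvectorBasis.sum_inner_mul_inner (WithLp.toLp 2 x : EuclideanSpace ℝ ι) (WithLp.toLp 2 y : EuclideanSpace ℝ ι)
  simp only [inner_dot, WithLp.ofLp_toLp] at hb
  rw [show x ⬝ᵥ y = x ⬝ᵥ y from rfl, ← hb]
  refine Finset.sum_congr rfl fun j _ => ?_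
  rw [show (x : ι → ℝ) ⬝ᵥ (h.eigenvectorBasis j : ι → ℝ) = co h x j from dotProduct_comm _ _]; rfl

lemma basis_dot_self (h : M.IsHermitian) (j : ι) :
    (h.eigenvectorBasis j : ι → ℝ) ⬝ᵥ (h.eigenvectorBasis j : ι → ℝ) = 1 := by
  have h2 : ⟪h.eigenvectorBasis j, h.eigenvectorBasis j⟫ = 1 := by
    rw [real_inner_self_eq_norm_sq, h.eigenvectorBasis.orthonormal.1 j]; norm_num
  rw [inner_dot] at h2; exact h2

lemma eig_eq_quad (h : M.IsHermitian) (j : ι) :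
    (h.eigenvectorBasis j : ι → ℝ) ⬝ᵥ M *ᵥ (h.eigenvectorBasis j : ι → ℝ) = h.eigenvalues j := by
  erw [h.mulVec_eigenvectorBasis]; rw [dotProduct_smul, smul_eq_mul]; erw [basis_dot_self h]; rw [mul_one]

/-- If the quadratic form is nonneg, all eigenvalues are nonneg. -/
lemma eig_nonneg (h : M.IsHermitian) (hpsd : ∀ x : ι → ℝ, 0 ≤ x ⬝ᵥ M *ᵥ x) (j : ι) :
    0 ≤ h.eigenvalues j := by
  rw [← eig_eq_quad h j]; exact hpsd _

/-- quadratic form lower bound from a lower bound on all eigenvalues -/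
lemma quad_ge (h : M.IsHermitian) {c : ℝ} (hc : ∀ j, c ≤ h.eigenvalues j) (x : ι → ℝ) :
    c * (x ⬝ᵥ x) ≤ x ⬝ᵥ M *ᵥ x := by
  rw [bilin_eq h x x, dot_eq h x x, Finset.mul_sum]
  refine Finset.sum_le_sum fun j _ => ?_
  have : 0 ≤ co h x j * co h x j := mul_self_nonneg _
  nlinarith [hc j]

lemma quad_le (h : M.IsHermitian) {c : ℝ} (hc : ∀ j, h.eigenvalues j ≤ c) (x : ι → ℝ) :
    x ⬝ᵥ M *ᵥ x ≤ c * (x ⬝ᵥ x) := by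
  rw [bilin_eq h x x, dot_eq h x x, Finset.mul_sum]
  refine Finset.sum_le_sum fun j _ => ?_
  nlinarith [hc j, mul_self_nonneg (co h x j)]

lemma matEigs_eq (h : M.IsHermitian) : matEigs M = h.eigenvalues := by
  unfold matEigs
  rw [dif_pos h]

lemma lamMin_le (h : M.IsHermitian) (j : ι) : lamMin M ≤ h.eigenvalues j := by
  rw [← matEigs_eq h]
  exact ciInf_le (Finite.bddBelow_range _) j

lemma le_lamMin [Nonempty ι] (h : M.IsHermitian) {c : ℝ} (hc : ∀ j, c ≤ h.eigenvalues j) :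
    c ≤ lamMin M := by
  rw [lamMin, matEigs_eq h]
  exact le_ciInf hc

lemma le_lamMax (h : M.IsHermitian) (j : ι) : h.eigenvalues j ≤ lamMax M := by
  rw [lamMax, matEigs_eq h]
  exact le_ciSup (Finite.bddAbove_range _) j

/-- sorting: anything strictly below the second-sorted value is at the bottom index -/
lemma sort_lt_second {N : ℕ} (hN : 1 < N) (g : Fin N → ℝ) (j : Fin N)
    (hj : g j < g (Tuple.sort g ⟨1, hN⟩)) : j = Tuple.sort g ⟨0, by omega⟩ := by
  set σ := Tuple.sort g
  have hk : j = σ (σ.symm j) := (σ.apply_symm_apply j).symm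
  rcases lt_or_ge (σ.symm j) ⟨1, hN⟩ with hlt | hle
  · have : σ.symm j = ⟨0, by omega⟩ := by
      ext; simpa [Fin.lt_def] using Nat.lt_one_iff.mp hlt
    rw [hk, this]
  · exfalso
    have := Tuple.monotone_sort g hle
    simp only [Function.comp_apply] at this
    rw [← hk] at this
    exact absurd hj (not_lt.mpr this)

variable {n : ℕ} {A : Matrix (Fin n) (Fin n) ℝ}

lemma lap_herm (hAsymm : ∀ i j, A i j = A j i) : (lap A).IsHermitian := by
  rw [Matrix.IsHermitian, conjTranspose_eq_transpose_of_trivial]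
  ext i j
  simp only [transpose_apply, lap, of_apply]
  rcases eq_or_ne i j with rfl | hij
  · simp
  · rw [if_neg (Ne.symm hij), if_neg hij, hAsymm]

lemma lap_mulVec_one : lap A *ᵥ (fun _ => (1:ℝ)) = 0 := by
  funext i
  simp only [mulVec, dotProduct, mul_one, Pi.zero_apply]
  rw [← Finset.sum_erase_add _ _ (Finset.mem_univ i)]
  simp only [lap, of_apply, if_pos rfl]
  rw [Finset.sum_congr rfl (fun j hj => if_neg (fun hh : i = j => (Finset.ne_of_mem_erase hj) hh.symm))]
  simp

lemma lap_quad_eq (hAdiag : ∀ i, A i i = 0) (y : Fin n → ℝ) :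
    y ⬝ᵥ lap A *ᵥ y = ∑ i, ∑ j, A i j * y i ^ 2 - ∑ i, ∑ j, A i j * (y i * y j) := by
  simp only [dotProduct, mulVec, Finset.mul_sum, ← Finset.sum_sub_distrib]
  refine Finset.sum_congr rfl fun i _ => ?_
  rw [Finset.sum_sub_distrib,
    ← Finset.sum_erase_add _ _ (Finset.mem_univ i),
    ← Finset.sum_erase_add univ (fun j => A i j * y i ^ 2) (Finset.mem_univ i),
    ← Finset.sum_erase_add univ (fun j => A i j * (y i * y j)) (Finset.mem_univ i)]
  simp only [lap, of_apply]
  rw [Finset.sum_congr rfl (fun j hj =>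
      show y i * ((if i = j then (∑ k ∈ univ.erase i, A i k) else -A i j) * y j)
          = -(A i j * (y i * y j)) from by
        rw [if_neg (fun hh : i = j => (Finset.ne_of_mem_erase hj) hh.symm)]; ring),
    Finset.sum_neg_distrib, if_true, hAdiag i]
  have h2 : y i * ((∑ k ∈ univ.erase i, A i k) * y i) = ∑ x ∈ univ.erase i, A i x * y i ^ 2 := by
    rw [Finset.sum_mul, Finset.mul_sum]; exact Finset.sum_congr rfl fun j _ => by ring
  rw [h2]; ring

lemma lap_psd (hAsymm : ∀ i j, A i j = A j i) (hAnonneg : ∀ i j, 0 ≤ A i j)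
    (hAdiag : ∀ i, A i i = 0) (y : Fin n → ℝ) : 0 ≤ y ⬝ᵥ lap A *ᵥ y := by
  have key : 2 * (y ⬝ᵥ lap A *ᵥ y) = ∑ i, ∑ j, A i j * (y i - y j) ^ 2 := by
    rw [lap_quad_eq hAdiag]
    have hswap : ∑ i, ∑ j, A i j * y j ^ 2 = ∑ i, ∑ j, A i j * y i ^ 2 := by
      rw [Finset.sum_comm]
      exact Finset.sum_congr rfl fun i _ => Finset.sum_congr rfl fun j _ => by rw [hAsymm]
    have expand : ∀ i j : Fin n, A i j * (y i - y j) ^ 2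
        = A i j * y i ^ 2 + A i j * y j ^ 2 - 2 * (A i j * (y i * y j)) := fun i j => by ring
    simp only [expand, Finset.sum_sub_distrib, Finset.sum_add_distrib, hswap, ← Finset.mul_sum]
    ring
  nlinarith [Finset.sum_nonneg (fun i (_ : i ∈ univ) => Finset.sum_nonneg
    (fun j (_ : j ∈ (univ : Finset (Fin n))) => mul_nonneg (hAnonneg i j) (sq_nonneg (y i - y j))))]


variable {ι : Type*} [Fintype ι] [DecidableEq ι] {M : Matrix ι ι ℝ}

lemma basis_dot_mulVec (h : M.IsHermitian) (y : ι → ℝ) (j : ι) :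
    (h.eigenvectorBasis j : ι → ℝ) ⬝ᵥ (M *ᵥ y) = h.eigenvalues j * co h y j := by
  rw [dotProduct_mulVec, ← mulVec_transpose]
  have hMt : Mᵀ = M := by
    have := h.eq; rwa [conjTranspose_eq_transpose_of_trivial] at this
  rw [hMt]; erw [h.mulVec_eigenvectorBasis]; rw [smul_dotProduct, smul_eq_mul]; rfl

lemma fiedler {n : ℕ} {A : Matrix (Fin n) (Fin n) ℝ}
    (hAsymm : ∀ i j, A i j = A j i) (hAnonneg : ∀ i j, 0 ≤ A i j)
    (hAdiag : ∀ i, A i i = 0) (hconn : 0 < eigTwo (lap A)) (y : Fin n → ℝ) :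
    eigTwo (lap A) *
      ((fun i => y i - (∑ i', y i') / n) ⬝ᵥ (fun i => y i - (∑ i', y i') / n))
      ≤ y ⬝ᵥ lap A *ᵥ y := by
  have hN : 1 < Fintype.card (Fin n) := by
    by_contra hc
    rw [eigTwo, dif_neg hc] at hconn
    exact lt_irrefl 0 hconn
  have hn : 1 < n := by simpa using hN
  have hn0 : (0:ℝ) < n := by positivity
  set e := Fintype.equivFin (Fin n) with he
  set M' := Matrix.reindex e e (lap A) with hM'
  have h' : M'.IsHermitian := by
    rw [hM', Matrix.reindex_apply]
    exact (lap_herm hAsymm).submatrix _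
  -- transport of mulVec
  have hmv : ∀ z : Fin (Fintype.card (Fin n)) → ℝ,
      M' *ᵥ z = ((lap A) *ᵥ (z ∘ e)) ∘ e.symm := by
    intro z
    rw [hM', Matrix.reindex_apply, submatrix_mulVec_equiv]
    simp
  have hdotT : ∀ (u v : Fin (Fintype.card (Fin n)) → ℝ),
      u ⬝ᵥ v = (u ∘ e) ⬝ᵥ (v ∘ e) := by
    intro u v
    rw [dotProduct, dotProduct, ← Equiv.sum_comp e (fun j => u j * v j)]
    rfl
  have hquadT : ∀ z : Fin (Fintype.card (Fin n)) → ℝ,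
      z ⬝ᵥ M' *ᵥ z = (z ∘ e) ⬝ᵥ (lap A *ᵥ (z ∘ e)) := by
    intro z
    rw [hmv z, hdotT]
    congr 1
    funext i
    simp
  have hpsd' : ∀ z, 0 ≤ z ⬝ᵥ M' *ᵥ z := fun z => by
    rw [hquadT]; exact lap_psd hAsymm hAnonneg hAdiag _
  have hone' : M' *ᵥ (fun _ => (1:ℝ)) = 0 := by
    rw [hmv]
    have : ((fun _ => (1:ℝ)) ∘ e) = (fun _ => (1:ℝ)) := rfl
    rw [this, lap_mulVec_one]
    funext j; rfl
  have heig0 : ∀ j, 0 ≤ h'.eigenvalues j := eig_nonneg h' hpsd'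
  -- s2
  set s2 := eigTwo (lap A) with hs2def
  have hME : matEigs M' = h'.eigenvalues := matEigs_eq h'
  have hs2 : s2 = matEigs M' (Tuple.sort (matEigs M') ⟨1, hN⟩) := by
    rw [hs2def, eigTwo, dif_pos hN]
    rfl
  -- the coordinates of the all-ones vector
  set r := co h' (fun _ => (1:ℝ)) with hrdef
  have hr : ∀ j, h'.eigenvalues j * r j = 0 := by
    intro j
    rw [hrdef, ← basis_dot_mulVec h' _ j, hone', dotProduct_zero]
  have hsumr : ∑ j, r j * r j = (Fintype.card (Fin n) : ℝ) := by
    have := (dot_eq h' (fun _ => (1:ℝ)) (fun _ => (1:ℝ))).symm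
    rw [hrdef]
    rw [this]
    simp [dotProduct]
  obtain ⟨j₀, hj₀⟩ : ∃ j₀, r j₀ ≠ 0 := by
    by_contra hc
    push_neg at hc
    rw [Finset.sum_congr rfl (fun j _ => by rw [hc j, mul_zero])] at hsumr
    simp only [Finset.sum_const_zero] at hsumr
    have hcpos : (0:ℝ) < (Fintype.card (Fin n) : ℝ) := by
      have : 0 < Fintype.card (Fin n) := by omega
      exact_mod_cast this
    linarith
  have hmu0 : h'.eigenvalues j₀ = 0 := by
    rcases mul_eq_zero.mp (hr j₀) with h | h
    · exact h
    · exact absurd h hj₀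
  have hbig : ∀ j, j ≠ j₀ → s2 ≤ h'.eigenvalues j := by
    intro j hj
    by_contra hc
    push_neg at hc
    have h1 : j = Tuple.sort (matEigs M') ⟨0, by omega⟩ := by
      apply sort_lt_second hN (matEigs M') j
      rw [← hs2, hME]; exact hc
    have h2 : j₀ = Tuple.sort (matEigs M') ⟨0, by omega⟩ := by
      apply sort_lt_second hN (matEigs M') j₀
      rw [← hs2, hME, hmu0]; exact hconn
    exact hj (h1.trans h2.symm)
  have hrz : ∀ j, j ≠ j₀ → r j = 0 := by
    intro j hj
    rcases mul_eq_zero.mp (hr j) with h | h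
    · exact absurd h (by linarith [hbig j hj, hconn])
    · exact h
  have hrj0 : r j₀ * r j₀ = (Fintype.card (Fin n) : ℝ) := by
    rw [← hsumr, ← Finset.sum_erase_add _ _ (Finset.mem_univ j₀)]
    rw [Finset.sum_congr rfl (fun j hj => by
      rw [hrz j (Finset.ne_of_mem_erase hj), mul_zero])]
    simp
  -- the transported vector
  set z : Fin (Fintype.card (Fin n)) → ℝ := y ∘ e.symm with hzdef
  have hze : z ∘ e = y := by funext i; simp [hzdef]
  have hSz : (fun _ => (1:ℝ)) ⬝ᵥ z = ∑ i, y i := by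
    rw [hdotT, hze]
    simp [dotProduct]
  have hco0 : r j₀ * co h' z j₀ = ∑ i, y i := by
    rw [← hSz, dot_eq h' (fun _ => (1:ℝ)) z, ← hrdef,
      ← Finset.sum_erase_add _ _ (Finset.mem_univ j₀)]
    rw [Finset.sum_congr rfl (fun j hj => by
      rw [hrz j (Finset.ne_of_mem_erase hj), zero_mul])]
    simp
  have hcard : ((Fintype.card (Fin n) : ℝ)) = (n:ℝ) := by simp
  have hco0sq : co h' z j₀ ^ 2 = (∑ i, y i) ^ 2 / n := by
    have h1 : (r j₀ * co h' z j₀) ^ 2 = (∑ i, y i) ^ 2 := by rw [hco0]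
    have h2 : r j₀ * r j₀ = (n:ℝ) := by rw [hrj0, hcard]
    field_simp at h1 ⊢
    nlinarith [h1, h2]
  -- quad lower bound
  have hquadlb : s2 * (z ⬝ᵥ z - co h' z j₀ ^ 2) ≤ z ⬝ᵥ M' *ᵥ z := by
    rw [bilin_eq h' z z, dot_eq h' z z]
    have key : ∀ j, s2 * ((if j = j₀ then 0 else 1) * (co h' z j * co h' z j))
        ≤ h'.eigenvalues j * (co h' z j * co h' z j) := by
      intro j
      rcases eq_or_ne j j₀ with rfl | hj
      · have h00 := mul_nonneg (heig0 j) (mul_self_nonneg (co h' z j))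
        simp only [eq_self_iff_true, if_true, if_pos rfl, zero_mul, mul_zero]
        linarith
      · simp only [if_neg hj, one_mul]
        have := hbig j hj
        nlinarith [mul_self_nonneg (co h' z j)]
    calc s2 * (∑ j, co h' z j * co h' z j - co h' z j₀ ^ 2)
        = ∑ j, s2 * ((if j = j₀ then 0 else 1) * (co h' z j * co h' z j)) := by
          rw [← Finset.mul_sum]
          congr 1
          have hsplit : ∀ i, (if i = j₀ then (0:ℝ) else 1) * (co h' z i * co h' z i)
              = co h' z i * co h' z i - (if i = j₀ then co h' z i * co h' z i else 0) := by
            intro i; by_cases hi : i = j₀ <;> simp [hi]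
          rw [Finset.sum_congr rfl fun i _ => hsplit i, Finset.sum_sub_distrib,
            Finset.sum_ite_eq' univ j₀ (fun i => co h' z i * co h' z i)]
          simp [sq]
      _ ≤ ∑ j, h'.eigenvalues j * (co h' z j * co h' z j) :=
          Finset.sum_le_sum (fun j _ => key j)
  -- transports
  have hquadz : z ⬝ᵥ M' *ᵥ z = y ⬝ᵥ lap A *ᵥ y := by rw [hquadT, hze]
  have hdotz : z ⬝ᵥ z = y ⬝ᵥ y := by rw [hdotT, hze]
  -- the centered norm identity
  have hcent : (fun i => y i - (∑ i', y i') / n) ⬝ᵥ (fun i => y i - (∑ i', y i') / n)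
      = y ⬝ᵥ y - (∑ i, y i) ^ 2 / n := by
    simp only [dotProduct]
    have expand : ∀ i : Fin n, (y i - (∑ i', y i') / n) * (y i - (∑ i', y i') / n)
        = y i * y i - 2 * ((∑ i', y i') / n) * y i + ((∑ i', y i') / n) ^ 2 := fun i => by ring
    rw [Finset.sum_congr rfl (fun i _ => expand i)]
    rw [Finset.sum_add_distrib, Finset.sum_sub_distrib, ← Finset.mul_sum, Finset.sum_const]
    simp only [Finset.card_univ, Fintype.card_fin, nsmul_eq_mul]
    field_simp
    ring
  rw [hcent, ← hquadz, ← hdotz, ← hco0sq]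
  exact hquadlb

lemma bilin_comm (h : M.IsHermitian) (x y : ι → ℝ) :
    x ⬝ᵥ M *ᵥ y = y ⬝ᵥ M *ᵥ x := by
  rw [bilin_eq h x y, bilin_eq h y x]
  exact Finset.sum_congr rfl fun j _ => by ring

lemma abs_bilin_le [Nonempty ι] (h : M.IsHermitian) (hpsd : ∀ x : ι → ℝ, 0 ≤ x ⬝ᵥ M *ᵥ x)
    {c : ℝ} (hc : ∀ j, h.eigenvalues j ≤ c) (x y : ι → ℝ) :
    |x ⬝ᵥ M *ᵥ y| ≤ c * (Real.sqrt (x ⬝ᵥ x) * Real.sqrt (y ⬝ᵥ y)) := by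
  have h0 := eig_nonneg h hpsd
  have hc0 : 0 ≤ c := le_trans (h0 (Classical.arbitrary ι)) (hc _)
  rw [bilin_eq h x y]
  calc |∑ j, h.eigenvalues j * (co h x j * co h y j)|
      ≤ ∑ j, |h.eigenvalues j * (co h x j * co h y j)| := Finset.abs_sum_le_sum_abs _ _
    _ ≤ ∑ j, c * (|co h x j| * |co h y j|) := by
        refine Finset.sum_le_sum fun j _ => ?_
        rw [abs_mul, abs_mul, abs_of_nonneg (h0 j)]
        exact mul_le_mul_of_nonneg_right (hc j)
          (mul_nonneg (abs_nonneg _) (abs_nonneg _))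
    _ = c * ∑ j, |co h x j| * |co h y j| := by rw [Finset.mul_sum]
    _ ≤ c * (Real.sqrt (x ⬝ᵥ x) * Real.sqrt (y ⬝ᵥ y)) := by
        have hcs := Real.sum_mul_le_sqrt_mul_sqrt univ (fun j => |co h x j|) (fun j => |co h y j|)
        have hx : ∑ j, |co h x j| ^ 2 = x ⬝ᵥ x := by
          rw [dot_eq h x x]
          exact Finset.sum_congr rfl fun j _ => by rw [sq_abs, sq]
        have hy : ∑ j, |co h y j| ^ 2 = y ⬝ᵥ y := by
          rw [dot_eq h y y]
          exact Finset.sum_congr rfl fun j _ => by rw [sq_abs, sq]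
        rw [hx, hy] at hcs
        exact mul_le_mul_of_nonneg_left hcs hc0

lemma quad_ge_lamMin [Nonempty ι] (h : M.IsHermitian) (x : ι → ℝ) :
    lamMin M * (x ⬝ᵥ x) ≤ x ⬝ᵥ M *ᵥ x :=
  quad_ge h (fun j => lamMin_le h j) x

lemma blockDiag_quad {n d : ℕ} (Qb : Fin n → Matrix (Fin d) (Fin d) ℝ)
    (x : Fin n × Fin d → ℝ) :
    x ⬝ᵥ blockDiag Qb *ᵥ x
      = ∑ i, (fun k => x (i, k)) ⬝ᵥ Qb i *ᵥ (fun k => x (i, k)) := by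
  simp only [dotProduct, mulVec, _root_.blockDiag, of_apply, Fintype.sum_prod_type]
  refine Finset.sum_congr rfl fun i _ => Finset.sum_congr rfl fun k _ => ?_
  congr 1
  rw [Finset.sum_congr rfl (fun j (_ : j ∈ univ) =>
    show (∑ l, (if i = j then Qb i k l else 0) * x (j, l))
        = if i = j then (∑ l, Qb i k l * x (j, l)) else 0 from by
      by_cases hij : i = j
      · subst hij; simp
      · simp [hij])]
  rw [Finset.sum_ite_eq univ i (fun j => ∑ l, Qb i k l * x (j, l))]
  simp

lemma kron_quad {n d : ℕ} (L : Matrix (Fin n) (Fin n) ℝ) (x : Fin n × Fin d → ℝ) :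
    x ⬝ᵥ (L ⊗ₖ (1 : Matrix (Fin d) (Fin d) ℝ)) *ᵥ x
      = ∑ k, (fun i => x (i, k)) ⬝ᵥ L *ᵥ (fun i => x (i, k)) := by
  simp only [dotProduct, mulVec, kroneckerMap_apply, Fintype.sum_prod_type]
  rw [Finset.sum_comm]
  refine Finset.sum_congr rfl fun k _ => Finset.sum_congr rfl fun i _ => ?_
  congr 1
  refine Finset.sum_congr rfl fun j _ => ?_
  rw [Finset.sum_congr rfl (fun l (_ : l ∈ univ) =>
    show L i j * (1 : Matrix (Fin d) (Fin d) ℝ) k l * x (j, l)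
        = if k = l then L i j * x (j, l) else 0 from by
      by_cases hkl : k = l
      · subst hkl; simp [Matrix.one_apply]
      · simp [Matrix.one_apply, hkl])]
  rw [Finset.sum_ite_eq univ k (fun l => L i j * x (j, l))]
  simp

lemma endgame {lbar lmax α s2 ρ S T Qx : ℝ}
    (hα : 0 < α) (hs2 : 0 < s2) (hlbar : 0 < lbar) (hlmax : 0 < lmax)
    (hρpos : 0 < ρ) (hρval : lmax * ρ = lbar / 4)
    (hS0 : 0 ≤ S) (hT0 : 0 ≤ T)
    (h1 : lbar * S - 2 * lmax * (Real.sqrt S * Real.sqrt T) + α * (s2 * T) ≤ Qx)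
    (h2 : α * (s2 * T) ≤ Qx) :
    1 / (1 + ρ ^ 2) * min (s2 * α * ρ ^ 2) (lbar / 2) * (S + T) ≤ Qx := by
  set u := Real.sqrt S with hu
  set v := Real.sqrt T with hv
  have hu0 : 0 ≤ u := Real.sqrt_nonneg _
  have hv0 : 0 ≤ v := Real.sqrt_nonneg _
  have hu2 : u ^ 2 = S := Real.sq_sqrt hS0
  have hv2 : v ^ 2 = T := Real.sq_sqrt hT0
  set mval := min (s2 * α * ρ ^ 2) (lbar / 2) with hmval
  have hm1 : mval ≤ s2 * α * ρ ^ 2 := min_le_left _ _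
  have hm2 : mval ≤ lbar / 2 := min_le_right _ _
  have hmpos : 0 < mval := lt_min (by positivity) (by positivity)
  have hden : (0:ℝ) < 1 + ρ ^ 2 := by positivity
  set c0 := 1 / (1 + ρ ^ 2) * mval with hc0
  have hc0pos : 0 < c0 := by rw [hc0]; positivity
  show c0 * (S + T) ≤ Qx
  rcases le_or_gt v (ρ * u) with hcase | hcase
  · have huv : u * v ≤ ρ * u ^ 2 := by nlinarith
    have hD : (lbar / 2) * S ≤ lbar * S - 2 * lmax * (u * v) := by
      have h3 : 2 * lmax * (u * v) ≤ 2 * lmax * (ρ * u ^ 2) :=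
        mul_le_mul_of_nonneg_left huv (by positivity)
      have h4 : 2 * lmax * (ρ * u ^ 2) = 2 * (lmax * ρ) * u ^ 2 := by ring
      rw [h4, hρval] at h3
      nlinarith
    have hTS : T ≤ ρ ^ 2 * S := by nlinarith
    have hgoal : c0 * (S + T) ≤ (lbar / 2) * S := by
      have h5 : c0 * (S + T) ≤ c0 * (S + ρ ^ 2 * S) := by
        apply mul_le_mul_of_nonneg_left _ (le_of_lt hc0pos)
        linarith
      have h6 : c0 * (S + ρ ^ 2 * S) = mval * S := by
        rw [hc0]; field_simp
      have h7 : mval * S ≤ (lbar / 2) * S := mul_le_mul_of_nonneg_right hm2 hS0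
      linarith
    have h8 : 0 ≤ α * (s2 * T) := by positivity
    linarith
  · have h9 : ρ * u * (ρ * u) ≤ v * v :=
      mul_le_mul (le_of_lt hcase) (le_of_lt hcase) (by positivity) hv0
    have hS_le : ρ ^ 2 * S ≤ T := by nlinarith
    have hgoal : c0 * (S + T) ≤ α * (s2 * T) := by
      have h5 : c0 * (S + T) ≤ c0 * (T / ρ ^ 2 + T) := by
        apply mul_le_mul_of_nonneg_left _ (le_of_lt hc0pos)
        have : S ≤ T / ρ ^ 2 := by
          rw [le_div_iff₀ (by positivity)]
          nlinarith
        linarith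
      have h6 : c0 * (T / ρ ^ 2 + T) = mval * T / ρ ^ 2 := by
        rw [hc0]; field_simp
      have h7 : mval * T / ρ ^ 2 ≤ (s2 * α * ρ ^ 2) * T / ρ ^ 2 :=
        (div_le_div_iff_of_pos_right (by positivity : (0:ℝ) < ρ ^ 2)).mpr
          (mul_le_mul_of_nonneg_right hm1 hT0)
      have h8 : (s2 * α * ρ ^ 2) * T / ρ ^ 2 = α * (s2 * T) := by
        field_simp
      linarith
    linarith

end Scratch

open Scratch in
/-- If `λ₂(L) > 0` and `λ̄_min > 0`, then
`Q = diag(Q⁽¹⁾,…,Q⁽ⁿ⁾) + α (L ⊗ I_d)` is invertible and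
`λ₁(Q) ≥ (1/(1+ρ²)) min{λ₂(L) α ρ², λ̄_min/2}` with `ρ = λ̄_min/(4 λ_max)`. -/
theorem gtvmin_matrix_eigenvalue_lower_bound
    {n d : ℕ} (A : Matrix (Fin n) (Fin n) ℝ)
    (hAsymm : ∀ i j, A i j = A j i) (hAnonneg : ∀ i j, 0 ≤ A i j)
    (hAdiag : ∀ i, A i i = 0)
    (m : Fin n → ℕ) (X : (i : Fin n) → Matrix (Fin (m i)) (Fin d) ℝ)
    (Qb : Fin n → Matrix (Fin d) (Fin d) ℝ)
    (hQb : ∀ i, Qb i = (m i : ℝ)⁻¹ • ((X i)ᵀ * X i))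
    (α : ℝ) (hα : 0 < α)
    (Q : Matrix (Fin n × Fin d) (Fin n × Fin d) ℝ)
    (hQ : Q = blockDiag Qb + α • (lap A ⊗ₖ (1 : Matrix (Fin d) (Fin d) ℝ)))
    (lmax lbar ρ : ℝ)
    (hlmax : lmax = ⨆ i, lamMax (Qb i))
    (hlbar : lbar = lamMin ((n : ℝ)⁻¹ • ∑ i, Qb i))
    (hρ : ρ = lbar / (4 * lmax))
    (hconn : 0 < eigTwo (lap A)) (hlbarpos : 0 < lbar) :
    IsUnit Q.det ∧
      1 / (1 + ρ ^ 2) * min (eigTwo (lap A) * α * ρ ^ 2) (lbar / 2) ≤ lamMin Q := by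
  classical
  -- dimensions
  have hn : 1 < n := by
    by_contra hc
    have hc' : ¬ (1 < Fintype.card (Fin n)) := by simpa using hc
    rw [eigTwo, dif_neg hc'] at hconn
    exact lt_irrefl 0 hconn
  have hd : 0 < d := by
    by_contra hc
    push_neg at hc
    have hd0 : d = 0 := by omega
    subst hd0
    have hz : lbar = 0 := by
      rw [hlbar]; unfold lamMin
      exact Real.iInf_of_isEmpty (matEigs ((n : ℝ)⁻¹ • ∑ i, Qb i))
    linarith
  haveI : Nonempty (Fin n) := ⟨⟨0, by omega⟩⟩
  haveI : Nonempty (Fin d) := ⟨⟨0, by omega⟩⟩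
  have hn0 : (0:ℝ) < n := by positivity
  -- hermitian / psd facts about the local matrices
  have hQbh : ∀ i, (Qb i).IsHermitian := by
    intro i
    rw [hQb i, Matrix.IsHermitian, conjTranspose_eq_transpose_of_trivial,
      transpose_smul, transpose_mul, transpose_transpose]
  have hQbt : ∀ i, (Qb i)ᵀ = Qb i := by
    intro i
    have := (hQbh i).eq
    rwa [conjTranspose_eq_transpose_of_trivial] at this
  have hQbpsd : ∀ i, ∀ v : Fin d → ℝ, 0 ≤ v ⬝ᵥ Qb i *ᵥ v := by
    intro i v
    rw [hQb i, smul_mulVec, dotProduct_smul, smul_eq_mul, ← mulVec_mulVec,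
      dotProduct_mulVec, vecMul_transpose, dotProduct]
    exact mul_nonneg (by positivity) (Finset.sum_nonneg fun j _ => mul_self_nonneg _)
  -- the averaged matrix
  set Qa : Matrix (Fin d) (Fin d) ℝ := (n : ℝ)⁻¹ • ∑ i, Qb i with hQa
  have hQah : Qa.IsHermitian := by
    rw [hQa, Matrix.IsHermitian, conjTranspose_eq_transpose_of_trivial, transpose_smul,
      Matrix.transpose_sum]
    congr 1
    exact Finset.sum_congr rfl fun i _ => hQbt i
  -- eigenvalue bounds for the local matrices
  have hlamMaxle : ∀ i, lamMax (Qb i) ≤ lmax := by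
    intro i
    rw [hlmax]
    exact le_ciSup (f := fun i => lamMax (Qb i)) (Finite.bddAbove_range _) i
  have hQbeig : ∀ i j, (hQbh i).eigenvalues j ≤ lmax :=
    fun i j => le_trans (le_lamMax (hQbh i) j) (hlamMaxle i)
  have hquadQb_le : ∀ i (v : Fin d → ℝ), v ⬝ᵥ Qb i *ᵥ v ≤ lmax * (v ⬝ᵥ v) :=
    fun i v => quad_le (hQbh i) (hQbeig i) v
  -- quadratic form of Qa expands
  have hQaquad : ∀ v : Fin d → ℝ,
      v ⬝ᵥ Qa *ᵥ v = (n:ℝ)⁻¹ * ∑ i, v ⬝ᵥ Qb i *ᵥ v := by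
    intro v
    rw [hQa, smul_mulVec, dotProduct_smul, smul_eq_mul]
    congr 1
    have hsum_mv : (∑ i, Qb i) *ᵥ v = ∑ i, Qb i *ᵥ v := by
      funext k
      simp only [mulVec, dotProduct, Finset.sum_apply, Matrix.sum_apply, Finset.sum_mul]
      exact Finset.sum_comm
    rw [hsum_mv]
    simp only [dotProduct, Finset.sum_apply, Finset.mul_sum]
    exact Finset.sum_comm
  -- lmax is positive
  have hlmaxpos : 0 < lmax := by
    have h1 := quad_ge_lamMin hQah (hQah.eigenvectorBasis (Classical.arbitrary (Fin d)) : Fin d → ℝ)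
    set v : Fin d → ℝ := (hQah.eigenvectorBasis (Classical.arbitrary (Fin d)) : Fin d → ℝ) with hv
    have hv1 : v ⬝ᵥ v = 1 := basis_dot_self hQah _
    have h2 : v ⬝ᵥ Qa *ᵥ v ≤ lmax := by
      have hsumle : ∑ i, v ⬝ᵥ Qb i *ᵥ v ≤ (n:ℝ) * lmax := by
        have h3 : ∑ i, v ⬝ᵥ Qb i *ᵥ v ≤ ∑ i : Fin n, lmax * (v ⬝ᵥ v) :=
          Finset.sum_le_sum fun i _ => hquadQb_le i v
        rwa [hv1, mul_one, Finset.sum_const, Finset.card_univ, Fintype.card_fin,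
          nsmul_eq_mul] at h3
      calc v ⬝ᵥ Qa *ᵥ v = (n:ℝ)⁻¹ * ∑ i, v ⬝ᵥ Qb i *ᵥ v := hQaquad v
        _ ≤ (n:ℝ)⁻¹ * ((n:ℝ) * lmax) := by
            apply mul_le_mul_of_nonneg_left hsumle (by positivity)
        _ = lmax := by field_simp
    rw [hv1, mul_one, ← hlbar] at h1
    linarith
  have hρpos : 0 < ρ := by rw [hρ]; positivity
  have hρval : lmax * ρ = lbar / 4 := by
    rw [hρ]; field_simp
  -- the constant
  set s2 := eigTwo (lap A) with hs2
  set mval := min (s2 * α * ρ ^ 2) (lbar / 2) with hmval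
  have hmvalpos : 0 < mval := by
    rw [hmval]
    apply lt_min
    · positivity
    · positivity
  set c0 := 1 / (1 + ρ ^ 2) * mval with hc0
  have hc0pos : 0 < c0 := by rw [hc0]; positivity
  -- hermitian-ness of Q
  have hQh : Q.IsHermitian := by
    have hlapt : (lap A)ᵀ = lap A := by
      have := (lap_herm hAsymm).eq
      rwa [conjTranspose_eq_transpose_of_trivial] at this
    have h1 : (_root_.blockDiag Qb)ᵀ = _root_.blockDiag Qb := by
      ext ⟨i, k⟩ ⟨j, l⟩
      simp only [transpose_apply, _root_.blockDiag, of_apply]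
      rcases eq_or_ne i j with rfl | hij
      · simp only [if_pos rfl]
        rw [show Qb i l k = (Qb i)ᵀ k l from rfl, hQbt i]
      · rw [if_neg (Ne.symm hij), if_neg hij]
    have h2 : (lap A ⊗ₖ (1 : Matrix (Fin d) (Fin d) ℝ))ᵀ = lap A ⊗ₖ 1 := by
      ext ⟨i, k⟩ ⟨j, l⟩
      simp only [transpose_apply, kroneckerMap_apply]
      rw [show lap A j i = lap A i j from congrFun (congrFun hlapt i) j]
      congr 1
      simp [Matrix.one_apply, eq_comm]
    rw [hQ, Matrix.IsHermitian, conjTranspose_eq_transpose_of_trivial, transpose_add,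
      transpose_smul, h1, h2]
  -- THE KEY BOUND
  have key : ∀ x : Fin n × Fin d → ℝ, c0 * (x ⬝ᵥ x) ≤ x ⬝ᵥ Q *ᵥ x := by
    intro x
    set cb : Fin d → ℝ := fun k => (∑ i, x (i, k)) / n with hcb
    set xt : Fin n × Fin d → ℝ := fun p => x p - cb p.2 with hxt
    have hcolsum : ∀ k, ∑ i, xt (i, k) = 0 := by
      intro k
      simp only [hxt]
      rw [Finset.sum_sub_distrib, Finset.sum_const, Finset.card_univ, Fintype.card_fin,
        nsmul_eq_mul, hcb]
      field_simp
      ring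
    -- Pythagoras
    have hPyth : x ⬝ᵥ x = (n:ℝ) * (cb ⬝ᵥ cb) + xt ⬝ᵥ xt := by
      have hterm : ∀ p : Fin n × Fin d,
          x p * x p = cb p.2 * cb p.2 + 2 * (cb p.2 * xt p) + xt p * xt p := by
        intro p; simp only [hxt]; ring
      rw [dotProduct, Finset.sum_congr rfl fun p _ => hterm p,
        Finset.sum_add_distrib, Finset.sum_add_distrib]
      have e1 : ∑ p : Fin n × Fin d, cb p.2 * cb p.2 = (n:ℝ) * (cb ⬝ᵥ cb) := by
        rw [Fintype.sum_prod_type]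
        have e1' : ∀ i : Fin n, ∑ k, cb (i, k).2 * cb (i, k).2 = cb ⬝ᵥ cb := fun i => rfl
        rw [Finset.sum_congr rfl fun i _ => e1' i, Finset.sum_const, Finset.card_univ,
          Fintype.card_fin, nsmul_eq_mul]
      have e2 : ∑ p : Fin n × Fin d, 2 * (cb p.2 * xt p) = 0 := by
        rw [Fintype.sum_prod_type, Finset.sum_comm]
        refine Finset.sum_eq_zero fun k _ => ?_
        have : ∑ i, 2 * (cb k * xt (i, k)) = 2 * cb k * ∑ i, xt (i, k) := by
          rw [Finset.mul_sum]
          exact Finset.sum_congr rfl fun i _ => by ring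
        rw [this, hcolsum k, mul_zero]
      rw [e1, e2]
      have e3 : ∑ p : Fin n × Fin d, xt p * xt p = xt ⬝ᵥ xt := rfl
      rw [e3]; ring
    -- quadratic form splits
    have hsplit : x ⬝ᵥ Q *ᵥ x
        = (∑ i, (fun k => x (i, k)) ⬝ᵥ Qb i *ᵥ (fun k => x (i, k)))
          + α * ∑ k, (fun i => x (i, k)) ⬝ᵥ lap A *ᵥ (fun i => x (i, k)) := by
      rw [hQ, add_mulVec, dotProduct_add, blockDiag_quad, smul_mulVec,
        dotProduct_smul, smul_eq_mul, kron_quad]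
    -- Laplacian part
    have hsumT : ∑ k, ((fun i => xt (i, k)) ⬝ᵥ (fun i => xt (i, k))) = xt ⬝ᵥ xt := by
      simp only [dotProduct, Fintype.sum_prod_type]
      exact Finset.sum_comm
    have hlap_ge : s2 * (xt ⬝ᵥ xt) ≤ ∑ k, (fun i => x (i, k)) ⬝ᵥ lap A *ᵥ (fun i => x (i, k)) := by
      rw [← hsumT, Finset.mul_sum]
      refine Finset.sum_le_sum fun k _ => ?_
      have hf := fiedler hAsymm hAnonneg hAdiag hconn (fun i => x (i, k))
      have hveq : (fun i => (fun i' => x (i', k)) i - (∑ i', x (i', k)) / n) = fun i => xt (i, k) := by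
        funext i; simp only [hxt, hcb]
      rw [hveq] at hf
      exact hf
    -- local part
    have hrow : ∀ i : Fin n, (fun k => x (i, k)) = cb + (fun k => xt (i, k)) := by
      intro i; funext k; simp only [hxt, Pi.add_apply]; ring
    have hexp : ∀ i : Fin n, (fun k => x (i, k)) ⬝ᵥ Qb i *ᵥ (fun k => x (i, k))
        = cb ⬝ᵥ Qb i *ᵥ cb + 2 * ((fun k => xt (i, k)) ⬝ᵥ Qb i *ᵥ cb)
          + (fun k => xt (i, k)) ⬝ᵥ Qb i *ᵥ (fun k => xt (i, k)) := by
      intro i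
      rw [hrow i, mulVec_add, add_dotProduct, dotProduct_add, dotProduct_add]
      have hcomm : cb ⬝ᵥ Qb i *ᵥ (fun k => xt (i, k)) = (fun k => xt (i, k)) ⬝ᵥ Qb i *ᵥ cb :=
        bilin_comm (hQbh i) _ _
      rw [hcomm]
      ring
    -- D pieces
    have havg : lbar * ((n:ℝ) * (cb ⬝ᵥ cb)) ≤ ∑ i, cb ⬝ᵥ Qb i *ᵥ cb := by
      have h1 := quad_ge_lamMin hQah cb
      rw [hQaquad cb, ← hlbar] at h1
      have := mul_le_mul_of_nonneg_left h1 (le_of_lt hn0)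
      calc lbar * ((n:ℝ) * (cb ⬝ᵥ cb)) = (n:ℝ) * (lbar * (cb ⬝ᵥ cb)) := by ring
        _ ≤ (n:ℝ) * ((n:ℝ)⁻¹ * ∑ i, cb ⬝ᵥ Qb i *ᵥ cb) := this
        _ = ∑ i, cb ⬝ᵥ Qb i *ᵥ cb := by field_simp
    have hdotself : ∀ {κ : Type} [Fintype κ] (v : κ → ℝ), 0 ≤ v ⬝ᵥ v := by
      intro κ _ v
      exact Finset.sum_nonneg fun j _ => mul_self_nonneg _
    have hcross : ∀ i : Fin n,
        -(lmax * (Real.sqrt ((fun k => xt (i, k)) ⬝ᵥ (fun k => xt (i, k))) * Real.sqrt (cb ⬝ᵥ cb)))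
          ≤ (fun k => xt (i, k)) ⬝ᵥ Qb i *ᵥ cb := by
      intro i
      have := abs_bilin_le (hQbh i) (hQbpsd i) (hQbeig i) (fun k => xt (i, k)) cb
      have h2 := neg_abs_le ((fun k => xt (i, k)) ⬝ᵥ Qb i *ᵥ cb)
      linarith
    have hsumTi : ∑ i, ((fun k => xt (i, k)) ⬝ᵥ (fun k => xt (i, k))) = xt ⬝ᵥ xt := by
      simp only [dotProduct, Fintype.sum_prod_type]
    have hcs : ∑ i, Real.sqrt ((fun k => xt (i, k)) ⬝ᵥ (fun k => xt (i, k)))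
        ≤ Real.sqrt n * Real.sqrt (xt ⬝ᵥ xt) := by
      have h1 := Real.sum_mul_le_sqrt_mul_sqrt univ
        (fun i => Real.sqrt ((fun k => xt (i, k)) ⬝ᵥ (fun k => xt (i, k)))) (fun _ => 1)
      simp only [mul_one, one_pow] at h1
      have h2 : ∑ i, (Real.sqrt ((fun k => xt (i, k)) ⬝ᵥ (fun k => xt (i, k)))) ^ 2
          = xt ⬝ᵥ xt := by
        rw [← hsumTi]
        exact Finset.sum_congr rfl fun i _ => Real.sq_sqrt (hdotself _)
      rw [h2] at h1
      have h3 : ∑ _i : Fin n, (1:ℝ) = (n:ℝ) := by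
        rw [Finset.sum_const, Finset.card_univ, Fintype.card_fin, nsmul_eq_mul, mul_one]
      rw [h3] at h1
      calc ∑ i, Real.sqrt ((fun k => xt (i, k)) ⬝ᵥ (fun k => xt (i, k)))
          ≤ Real.sqrt (xt ⬝ᵥ xt) * Real.sqrt n := h1
        _ = Real.sqrt n * Real.sqrt (xt ⬝ᵥ xt) := by ring
    -- notation for the scalar quantities
    set S : ℝ := (n:ℝ) * (cb ⬝ᵥ cb) with hSdef
    set T : ℝ := xt ⬝ᵥ xt with hTdef
    have hS0 : 0 ≤ S := by
      rw [hSdef]; exact mul_nonneg (le_of_lt hn0) (hdotself cb)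
    have hT0 : 0 ≤ T := hdotself xt
    have hsqS : Real.sqrt n * Real.sqrt (cb ⬝ᵥ cb) = Real.sqrt S := by
      rw [hSdef, Real.sqrt_mul (le_of_lt hn0)]
    -- the bound on the sum of local quadratic forms
    have hDge : lbar * S - 2 * lmax * (Real.sqrt S * Real.sqrt T)
        ≤ ∑ i, (fun k => x (i, k)) ⬝ᵥ Qb i *ᵥ (fun k => x (i, k)) := by
      rw [Finset.sum_congr rfl fun i _ => hexp i, Finset.sum_add_distrib, Finset.sum_add_distrib]
      have hA1 : lbar * S ≤ ∑ i, cb ⬝ᵥ Qb i *ᵥ cb := havg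
      have hA3 : (0:ℝ) ≤ ∑ i, (fun k => xt (i, k)) ⬝ᵥ Qb i *ᵥ (fun k => xt (i, k)) :=
        Finset.sum_nonneg fun i _ => hQbpsd i _
      have hA2 : -(lmax * (Real.sqrt S * Real.sqrt T))
          ≤ ∑ i, (fun k => xt (i, k)) ⬝ᵥ Qb i *ᵥ cb := by
        have h1 : ∑ i, -(lmax * (Real.sqrt ((fun k => xt (i, k)) ⬝ᵥ (fun k => xt (i, k))) * Real.sqrt (cb ⬝ᵥ cb)))
            ≤ ∑ i, (fun k => xt (i, k)) ⬝ᵥ Qb i *ᵥ cb :=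
          Finset.sum_le_sum fun i _ => hcross i
        have h2 : ∑ i, -(lmax * (Real.sqrt ((fun k => xt (i, k)) ⬝ᵥ (fun k => xt (i, k))) * Real.sqrt (cb ⬝ᵥ cb)))
            = -(lmax * Real.sqrt (cb ⬝ᵥ cb) * ∑ i, Real.sqrt ((fun k => xt (i, k)) ⬝ᵥ (fun k => xt (i, k)))) := by
          rw [Finset.mul_sum, ← Finset.sum_neg_distrib]
          exact Finset.sum_congr rfl fun i _ => by ring
        have h3 : lmax * Real.sqrt (cb ⬝ᵥ cb) * ∑ i, Real.sqrt ((fun k => xt (i, k)) ⬝ᵥ (fun k => xt (i, k)))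
            ≤ lmax * Real.sqrt (cb ⬝ᵥ cb) * (Real.sqrt n * Real.sqrt T) := by
          apply mul_le_mul_of_nonneg_left hcs
          exact mul_nonneg (le_of_lt hlmaxpos) (Real.sqrt_nonneg _)
        have h4 : lmax * Real.sqrt (cb ⬝ᵥ cb) * (Real.sqrt n * Real.sqrt T)
            = lmax * (Real.sqrt S * Real.sqrt T) := by
          rw [← hsqS]; ring
        rw [h2] at h1
        linarith
      have hsum2 : ∑ i, 2 * ((fun k => xt (i, k)) ⬝ᵥ Qb i *ᵥ cb)
          = 2 * ∑ i, (fun k => xt (i, k)) ⬝ᵥ Qb i *ᵥ cb := by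
        rw [Finset.mul_sum]
      rw [hsum2]
      linarith
    -- assemble
    have hquad_ge1 : lbar * S - 2 * lmax * (Real.sqrt S * Real.sqrt T) + α * (s2 * T)
        ≤ x ⬝ᵥ Q *ᵥ x := by
      rw [hsplit]
      have := mul_le_mul_of_nonneg_left hlap_ge (le_of_lt hα)
      linarith
    have hquad_ge2 : α * (s2 * T) ≤ x ⬝ᵥ Q *ᵥ x := by
      rw [hsplit]
      have h1 : (0:ℝ) ≤ ∑ i, (fun k => x (i, k)) ⬝ᵥ Qb i *ᵥ (fun k => x (i, k)) :=
        Finset.sum_nonneg fun i _ => hQbpsd i _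
      have := mul_le_mul_of_nonneg_left hlap_ge (le_of_lt hα)
      linarith
    rw [hPyth]
    exact endgame hα hconn hlbarpos hlmaxpos hρpos hρval hS0 hT0 hquad_ge1 hquad_ge2
  -- conclude
  have heigpos : ∀ j, 0 < hQh.eigenvalues j := by
    intro j
    have h1 := key (hQh.eigenvectorBasis j : Fin n × Fin d → ℝ)
    rw [eig_eq_quad hQh j] at h1
    rw [basis_dot_self hQh j, mul_one] at h1
    linarith
  constructor
  · rw [hQh.det_eq_prod_eigenvalues]
    apply isUnit_iff_ne_zero.mpr
    apply ne_of_gt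
    apply Finset.prod_pos
    intro j _
    exact_mod_cast heigpos j
  · apply le_lamMin hQh
    intro j
    have h1 := key (hQh.eigenvectorBasis j : Fin n × Fin d → ℝ)
    rw [eig_eq_quad hQh j, basis_dot_self hQh j, mul_one] at h1
    exact h1
end
end

section
/- Let C ⊆ V be a nonempty cluster of nodes whose local datasets satisfy y⁽ⁱ⁾ = X⁽ⁱ⁾ w̄^{(C)} + ε⁽ⁱ⁾ for all i ∈ C, with one common parameter vector w̄^{(C)} ∈ ℝ^d. Let (ŵ⁽¹⁾,…,ŵ⁽ⁿ⁾) be any solution of GTVMin, and for i ∈ C define w̃⁽ⁱ⁾ = ŵ⁽ⁱ⁾ − (1/|C|) Σ_{i'∈C} ŵ⁽ⁱ'⁾. If the induced subgraph on C is connected, i.e., λ₂(L_C) > 0, then Σ_{i∈C} ‖w̃⁽ⁱ⁾‖₂² ≤ (1/(α λ₂(L_C))) · [ Σ_{i∈C} (1/mᵢ)‖ε⁽ⁱ⁾‖₂² + 2 α b(C) (‖w̄^{(C)}‖₂² + R²) ], where b(C) = Σ_{{i,i'}∈E, i∈C, i'∉C} A_{i,i'} is the weighted cluster boundary and R = max_{i'∈V∖C}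 ‖ŵ⁽ⁱ'⁾‖₂ (with R = 0 if C = V). -/
open Matrix Finset
open scoped Kronecker

noncomputable section

/-- The Laplacian matrix of the subgraph induced by a cluster `C`. -/
def lapSub {n : ℕ} (A : Matrix (Fin n) (Fin n) ℝ) (C : Finset (Fin n)) :
    Matrix {i : Fin n // i ∈ C} {i : Fin n // i ∈ C} ℝ :=
  Matrix.of fun i j => if i = j then ∑ k ∈ C.erase i.1, A i.1 k else -A i.1 j.1


lemma dot_as_inner {N : ℕ} (x y : EuclideanSpace ℝ (Fin N)) :
    (x : Fin N → ℝ) ⬝ᵥ (y : Fin N → ℝ) = inner (𝕜 := ℝ) x y := by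
  rw [PiLp.inner_apply]
  simp [dotProduct, RCLike.inner_apply, mul_comm]

lemma repr_mulVec {N : ℕ} (B : Matrix (Fin N) (Fin N) ℝ) (hB : B.IsHermitian)
    (v : EuclideanSpace ℝ (Fin N)) (k : Fin N) :
    (hB.eigenvectorBasis.repr (WithLp.toLp 2 (B *ᵥ v : Fin N → ℝ))) k
      = hB.eigenvalues k * hB.eigenvectorBasis.repr v k := by
  rw [OrthonormalBasis.repr_apply_apply, OrthonormalBasis.repr_apply_apply]
  rw [← dot_as_inner, ← dot_as_inner]
  have hsym : Bᵀ = B := by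
    have := hB.eq; rwa [Matrix.conjTranspose_eq_transpose_of_trivial] at this
  have h2 : B *ᵥ ((hB.eigenvectorBasis k : EuclideanSpace ℝ (Fin N)) : Fin N → ℝ)
      = hB.eigenvalues k • ((hB.eigenvectorBasis k : EuclideanSpace ℝ (Fin N)) : Fin N → ℝ) :=
    hB.mulVec_eigenvectorBasis k
  calc (hB.eigenvectorBasis k : Fin N → ℝ) ⬝ᵥ (B *ᵥ (v : Fin N → ℝ))
      = ((hB.eigenvectorBasis k : Fin N → ℝ) ᵥ* B) ⬝ᵥ (v : Fin N → ℝ) := by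
        rw [Matrix.dotProduct_mulVec]
    _ = (B *ᵥ ((hB.eigenvectorBasis k : EuclideanSpace ℝ (Fin N)) : Fin N → ℝ)) ⬝ᵥ (v : Fin N → ℝ) := by
        conv_rhs => rw [← Matrix.vecMul_transpose, hsym]
    _ = hB.eigenvalues k * ((hB.eigenvectorBasis k : Fin N → ℝ) ⬝ᵥ (v : Fin N → ℝ)) := by
        rw [h2]; simp [dotProduct, PiLp.smul_apply, smul_eq_mul, Finset.mul_sum, mul_assoc]

lemma spectral_core {N : ℕ} (B : Matrix (Fin N) (Fin N) ℝ) (hB : B.IsHermitian)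
    (lam : ℝ) (hlampos : 0 < lam) (k0 : Fin N)
    (hlam : ∀ k, k ≠ k0 → lam ≤ hB.eigenvalues k)
    (u v : EuclideanSpace ℝ (Fin N)) (hu : u ≠ 0)
    (hBu : B *ᵥ (u : Fin N → ℝ) = 0)
    (hvu : (u : Fin N → ℝ) ⬝ᵥ (v : Fin N → ℝ) = 0) :
    lam * ((v : Fin N → ℝ) ⬝ᵥ (v : Fin N → ℝ)) ≤
      (v : Fin N → ℝ) ⬝ᵥ (B *ᵥ (v : Fin N → ℝ)) := by
  set b := hB.eigenvectorBasis with hb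
  set g := hB.eigenvalues with hg
  set c : Fin N → ℝ := fun k => b.repr v k with hc
  have hcu : ∀ k, k ≠ k0 → b.repr u k = 0 := by
    intro k hk
    have h0 : g k * b.repr u k = 0 := by
      have h := repr_mulVec B hB u k
      rw [hBu] at h
      simpa using h.symm
    rcases mul_eq_zero.mp h0 with h | h
    · exact absurd h (by have := hlam k hk; intro h'; rw [h'] at this; linarith)
    · exact h
  have hku0 : b.repr u k0 ≠ 0 := by
    intro h
    apply hu
    have hz : b.repr u = 0 := by
      ext k
      by_cases hk : k = k0
      · subst hk; simpa using h
      · simpa using hcu k hk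
    exact (map_eq_zero_iff _ (b.repr.injective)).mp hz
  have hinner : ∀ x y : EuclideanSpace ℝ (Fin N),
      (inner ℝ x y) = ∑ k, b.repr x k * b.repr y k := by
    intro x y
    rw [← b.repr.inner_map_map x y, PiLp.inner_apply]
    simp [RCLike.inner_apply]
    exact Finset.sum_congr rfl fun k _ => mul_comm _ _
  have hck0 : c k0 = 0 := by
    have h1 : (0:ℝ) = ∑ k, b.repr u k * b.repr v k := by
      rw [← hinner, ← dot_as_inner, hvu]
    rw [Finset.sum_eq_single k0 (fun k _ hk => by rw [hcu k hk, zero_mul])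
      (by simp)] at h1
    have := h1.symm
    rcases mul_eq_zero.mp this with h | h
    · exact absurd h hku0
    · exact h
  have hvv : (v : Fin N → ℝ) ⬝ᵥ (v : Fin N → ℝ) = ∑ k, c k ^ 2 := by
    rw [dot_as_inner, hinner]; simp [hc, sq]
  have hvBv : (v : Fin N → ℝ) ⬝ᵥ (B *ᵥ (v : Fin N → ℝ)) = ∑ k, g k * c k ^ 2 := by
    rw [show (v : Fin N → ℝ) ⬝ᵥ (B *ᵥ (v : Fin N → ℝ)) = inner ℝ v (WithLp.toLp 2 (B *ᵥ (v : Fin N → ℝ))) from dot_as_inner v (WithLp.toLp 2 (B *ᵥ (v : Fin N → ℝ))), hinner]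
    refine Finset.sum_congr rfl fun k _ => ?_
    rw [repr_mulVec B hB v k]
    ring
  rw [hvv, hvBv, Finset.mul_sum]
  refine Finset.sum_le_sum fun k _ => ?_
  by_cases hk : k = k0
  · subst hk; rw [hck0]; simp
  · exact mul_le_mul_of_nonneg_right (hlam k hk) (sq_nonneg _)

/-- The eigenvalues of a real symmetric matrix, in arbitrary order -/
lemma matEigs_eq {ι : Type*} [Fintype ι] [DecidableEq ι] (M : Matrix ι ι ℝ)
    (hM : M.IsHermitian) : matEigs M = hM.eigenvalues := by
  rw [matEigs, dif_pos hM]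

lemma spectral_general {ι : Type*} [Fintype ι] [DecidableEq ι]
    (M : Matrix ι ι ℝ) (hM : M.IsHermitian) (hconn : 0 < eigTwo M)
    (u v : ι → ℝ) (hu : u ≠ 0) (hMu : M *ᵥ u = 0) (hvu : u ⬝ᵥ v = 0) :
    eigTwo M * (v ⬝ᵥ v) ≤ v ⬝ᵥ (M *ᵥ v) := by
  by_cases hcard : 1 < Fintype.card ι
  swap
  · rw [eigTwo, dif_neg hcard] at hconn; exact absurd hconn (lt_irrefl 0)
  set N := Fintype.card ι with hN
  set e := Fintype.equivFin ι with he
  set B := Matrix.reindex e e M with hB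
  have hBH : B.IsHermitian := by
    rw [hB, Matrix.reindex_apply]
    exact hM.submatrix _
  have heig : eigTwo M = hBH.eigenvalues (Tuple.sort (matEigs B) ⟨1, hcard⟩) := by
    rw [eigTwo, dif_pos hcard]
    rw [sortedEigs, matEigs_eq B hBH]
  set g := hBH.eigenvalues with hg
  set σ := Tuple.sort (matEigs B) with hσ
  have hσg : σ = Tuple.sort g := by rw [hσ, matEigs_eq B hBH]
  set k0 := σ ⟨0, by omega⟩ with hk0
  set lam := g (σ ⟨1, hcard⟩) with hlamdef
  have hlam : ∀ k, k ≠ k0 → lam ≤ g k := by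
    intro k hk
    have hj : k = σ (σ.symm k) := (Equiv.apply_symm_apply σ k).symm
    have hj0 : σ.symm k ≠ ⟨0, by omega⟩ := by
      intro h
      apply hk
      rw [hj, h, hk0]
    have h1j : (⟨1, hcard⟩ : Fin N) ≤ σ.symm k := by
      rw [Fin.le_def]
      refine Nat.one_le_iff_ne_zero.mpr (fun h => hj0 ?_)
      exact Fin.ext h
    have := (hσg ▸ Tuple.monotone_sort g) h1j
    rw [Function.comp_apply, Function.comp_apply] at this
    calc lam = g (σ ⟨1, hcard⟩) := hlamdef
      _ ≤ g (σ (σ.symm k)) := this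
      _ = g k := by rw [← hj]
  -- transported vectors
  set u' : EuclideanSpace ℝ (Fin N) := WithLp.toLp 2 (u ∘ e.symm) with hu'
  set v' : EuclideanSpace ℝ (Fin N) := WithLp.toLp 2 (v ∘ e.symm) with hv'
  have htrans : ∀ x : ι → ℝ, B *ᵥ (x ∘ e.symm) = (M *ᵥ x) ∘ e.symm := by
    intro x
    rw [hB, Matrix.reindex_apply, Matrix.submatrix_mulVec_equiv]
    have hxx : (x ∘ ⇑e.symm) ∘ ⇑e.symm.symm = x := by ext j; simp
    rw [hxx]
  have hdot : ∀ x y : ι → ℝ, (x ∘ e.symm) ⬝ᵥ (y ∘ e.symm) = x ⬝ᵥ y := by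
    intro x y
    exact Fintype.sum_equiv e.symm _ _ (fun k => rfl)
  have hune : u' ≠ 0 := by
    intro h
    apply hu
    ext i
    have := congrArg (fun z : EuclideanSpace ℝ (Fin N) => z (e i)) h
    simpa [hu'] using this
  have hBu : B *ᵥ (u' : Fin N → ℝ) = 0 := by
    show B *ᵥ (u ∘ e.symm) = 0
    rw [htrans, hMu]
    rfl
  have hvu' : (u' : Fin N → ℝ) ⬝ᵥ (v' : Fin N → ℝ) = 0 := by
    show (u ∘ e.symm) ⬝ᵥ (v ∘ e.symm) = 0
    rw [hdot, hvu]
  have := spectral_core B hBH lam (heig ▸ hconn) k0 hlam u' v' hune hBu hvu'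
  rw [heig]
  have e1 : (v' : Fin N → ℝ) ⬝ᵥ (v' : Fin N → ℝ) = v ⬝ᵥ v := hdot v v
  have e2 : (v' : Fin N → ℝ) ⬝ᵥ (B *ᵥ (v' : Fin N → ℝ)) = v ⬝ᵥ (M *ᵥ v) := by
    show (v ∘ e.symm) ⬝ᵥ (B *ᵥ (v ∘ e.symm)) = _
    rw [htrans, hdot]
  rw [e1, e2] at this
  exact this

section quad
variable {n : ℕ} (A : Matrix (Fin n) (Fin n) ℝ) (C : Finset (Fin n))

lemma lapSub_entry (hAdiag : ∀ i, A i i = 0) (i j : {i : Fin n // i ∈ C}) :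
    lapSub A C i j =
      (if i = j then ∑ j' : {i : Fin n // i ∈ C}, A i.1 j'.1 else 0) - A i.1 j.1 := by
  by_cases h : i = j
  · subst h
    show (if i = i then ∑ k ∈ C.erase i.1, A i.1 k else -A i.1 i.1) = _
    rw [if_pos rfl, if_pos rfl, Finset.sum_erase _ (hAdiag i.1), hAdiag i.1, sub_zero,
      ← Finset.sum_coe_sort C (fun k => A i.1 k)]
  · show (if i = j then _ else -A i.1 j.1) = _
    rw [if_neg h, if_neg h, zero_sub]

lemma lapSub_quad (hAsymm : ∀ i j, A i j = A j i) (hAdiag : ∀ i, A i i = 0)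
    (v : {i : Fin n // i ∈ C} → ℝ) :
    v ⬝ᵥ ((lapSub A C) *ᵥ v) =
      (1/2) * ∑ i : {i : Fin n // i ∈ C}, ∑ j : {i : Fin n // i ∈ C},
        A i.1 j.1 * (v i - v j) ^ 2 := by
  set T : {i : Fin n // i ∈ C} → ℝ := fun i => ∑ j' : {i : Fin n // i ∈ C}, A i.1 j'.1 with hT
  have lhs_eq : v ⬝ᵥ ((lapSub A C) *ᵥ v) =
      (∑ i : {i : Fin n // i ∈ C}, T i * v i ^ 2) -
        ∑ i : {i : Fin n // i ∈ C}, ∑ j : {i : Fin n // i ∈ C}, A i.1 j.1 * (v i * v j) := by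
    rw [← Finset.sum_sub_distrib]
    refine Finset.sum_congr rfl fun i _ => ?_
    have hmv : (lapSub A C *ᵥ v) i = T i * v i - ∑ j : {i : Fin n // i ∈ C}, A i.1 j.1 * v j := by
      show ∑ j : {i : Fin n // i ∈ C}, lapSub A C i j * v j = _
      simp_rw [lapSub_entry A C hAdiag i, sub_mul]
      rw [Finset.sum_sub_distrib]
      congr 1
      simp only [ite_mul, zero_mul, Finset.sum_ite_eq, Finset.mem_univ, if_pos]
      rfl
    show v i * (lapSub A C *ᵥ v) i = _
    rw [hmv, mul_sub, Finset.mul_sum]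
    congr 1
    · ring
    · exact Finset.sum_congr rfl fun j _ => by ring
  have rhs_eq : (1/2:ℝ) * (∑ i : {i : Fin n // i ∈ C}, ∑ j : {i : Fin n // i ∈ C},
        A i.1 j.1 * (v i - v j) ^ 2) =
      (∑ i : {i : Fin n // i ∈ C}, T i * v i ^ 2) -
        ∑ i : {i : Fin n // i ∈ C}, ∑ j : {i : Fin n // i ∈ C}, A i.1 j.1 * (v i * v j) := by
    have expand : ∀ i j : {i : Fin n // i ∈ C}, A i.1 j.1 * (v i - v j) ^ 2 =
        A i.1 j.1 * v i ^ 2 + A i.1 j.1 * v j ^ 2 - 2 * (A i.1 j.1 * (v i * v j)) := by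
      intro i j; ring
    simp_rw [expand, Finset.sum_sub_distrib, Finset.sum_add_distrib]
    have h1 : ∑ i : {i : Fin n // i ∈ C}, ∑ j : {i : Fin n // i ∈ C}, A i.1 j.1 * v i ^ 2 =
        ∑ i : {i : Fin n // i ∈ C}, T i * v i ^ 2 := by
      refine Finset.sum_congr rfl fun i _ => ?_
      rw [hT, Finset.sum_mul]
    have h2 : ∑ i : {i : Fin n // i ∈ C}, ∑ j : {i : Fin n // i ∈ C}, A i.1 j.1 * v j ^ 2 =
        ∑ i : {i : Fin n // i ∈ C}, T i * v i ^ 2 := by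
      rw [Finset.sum_comm]
      refine Finset.sum_congr rfl fun j _ => ?_
      rw [hT, Finset.sum_mul]
      exact Finset.sum_congr rfl fun i _ => by rw [hAsymm i.1 j.1]
    have h3 : ∑ i : {i : Fin n // i ∈ C}, ∑ j : {i : Fin n // i ∈ C},
        2 * (A i.1 j.1 * (v i * v j)) =
        2 * ∑ i : {i : Fin n // i ∈ C}, ∑ j : {i : Fin n // i ∈ C}, A i.1 j.1 * (v i * v j) := by
      rw [Finset.mul_sum]
      exact Finset.sum_congr rfl fun i _ => by rw [Finset.mul_sum]
    rw [h1, h2, h3]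
    ring
  rw [lhs_eq, rhs_eq]
end quad

lemma lapSub_isHermitian {n : ℕ} (A : Matrix (Fin n) (Fin n) ℝ)
    (hAsymm : ∀ i j, A i j = A j i) (C : Finset (Fin n)) :
    (lapSub A C).IsHermitian := by
  rw [Matrix.IsHermitian]
  ext i j
  rw [Matrix.conjTranspose_apply]
  show star (lapSub A C j i) = lapSub A C i j
  rw [star_trivial]
  by_cases h : i = j
  · subst h; rfl
  · show (if j = i then _ else -A j.1 i.1) = (if i = j then _ else -A i.1 j.1)
    rw [if_neg (fun hh => h hh.symm), if_neg h, hAsymm j.1 i.1]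

lemma lapSub_mulVec_one {n : ℕ} (A : Matrix (Fin n) (Fin n) ℝ) (C : Finset (Fin n))
    (hAdiag : ∀ i, A i i = 0) :
    (lapSub A C) *ᵥ (fun _ => (1:ℝ)) = 0 := by
  ext i
  show ∑ j : {i : Fin n // i ∈ C}, lapSub A C i j * 1 = 0
  simp_rw [lapSub_entry A C hAdiag i, mul_one]
  rw [Finset.sum_sub_distrib]
  simp [Finset.sum_ite_eq]

lemma half_sum {n : ℕ} (G : Fin n → Fin n → ℝ)
    (hsym : ∀ i j, G i j = G j i) (hdiag : ∀ i, G i i = 0) :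
    ∑ p ∈ Finset.univ.filter (fun p : Fin n × Fin n => p.1 < p.2), G p.1 p.2 =
      (1/2) * ∑ i, ∑ j, G i j := by
  have key : ∑ i, ∑ j, G i j =
      (∑ i, ∑ j, if i < j then G i j else 0) + ∑ i, ∑ j, if j < i then G i j else 0 := by
    rw [← Finset.sum_add_distrib]
    refine Finset.sum_congr rfl fun i _ => ?_
    rw [← Finset.sum_add_distrib]
    refine Finset.sum_congr rfl fun j _ => ?_
    rcases lt_trichotomy i j with h | h | h
    · rw [if_pos h, if_neg (asymm h), add_zero]
    · subst h; rw [if_neg (lt_irrefl i), hdiag, add_zero]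
    · rw [if_neg (asymm h), if_pos h, zero_add]
  have h2 : ∑ i, ∑ j, (if j < i then G i j else 0) = ∑ i, ∑ j, if i < j then G i j else 0 := by
    rw [Finset.sum_comm]
    refine Finset.sum_congr rfl fun i _ => Finset.sum_congr rfl fun j _ => ?_
    by_cases h : i < j
    · rw [if_pos h, if_pos h, hsym]
    · rw [if_neg h, if_neg h]
  have h3 : ∑ p ∈ Finset.univ.filter (fun p : Fin n × Fin n => p.1 < p.2), G p.1 p.2 =
      ∑ i, ∑ j, if i < j then G i j else 0 := by
    rw [Finset.sum_filter, ← Finset.sum_product']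
    rfl
  rw [h3, key, h2]
  ring

lemma normsq_eq {d : ℕ} (x : EuclideanSpace ℝ (Fin d)) : ‖x‖ ^ 2 = ∑ l, x l ^ 2 := by
  rw [← real_inner_self_eq_norm_sq, PiLp.inner_apply]
  simp [RCLike.inner_apply, sq]

lemma esum_apply {d : ℕ} {β : Type*} (s : Finset β) (f : β → EuclideanSpace ℝ (Fin d))
    (l : Fin d) : (∑ i ∈ s, f i) l = ∑ i ∈ s, f i l := by
  exact map_sum (EuclideanSpace.projₗ (𝕜 := ℝ) l) f s

lemma spectral_side {n d : ℕ} (A : Matrix (Fin n) (Fin n) ℝ)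
    (hAsymm : ∀ i j, A i j = A j i) (hAdiag : ∀ i, A i i = 0)
    (C : Finset (Fin n)) (hCne : C.Nonempty)
    (what : Fin n → EuclideanSpace ℝ (Fin d))
    (hconn : 0 < eigTwo (lapSub A C)) :
    eigTwo (lapSub A C) * ∑ i ∈ C, ‖what i - (C.card : ℝ)⁻¹ • ∑ i' ∈ C, what i'‖ ^ 2 ≤
      (1/2) * ∑ i ∈ C, ∑ j ∈ C, A i j * ‖what i - what j‖ ^ 2 := by
  set wbar : EuclideanSpace ℝ (Fin d) := (C.card : ℝ)⁻¹ • ∑ i' ∈ C, what i' with hwbar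
  set v : Fin d → ({i : Fin n // i ∈ C} → ℝ) := fun l i => (what i.1 - wbar) l with hv
  have hM := lapSub_isHermitian A hAsymm C
  -- step 1
  have step1 : ∑ i ∈ C, ‖what i - wbar‖ ^ 2 = ∑ l, ∑ i : {i : Fin n // i ∈ C}, v l i ^ 2 := by
    rw [Finset.sum_comm]
    rw [← Finset.sum_coe_sort C (fun i => ‖what i - wbar‖ ^ 2)]
    exact Finset.sum_congr rfl fun i _ => normsq_eq _
  -- orthogonality
  have horth : ∀ l, (fun _ : {i : Fin n // i ∈ C} => (1:ℝ)) ⬝ᵥ v l = 0 := by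
    intro l
    show ∑ i : {i : Fin n // i ∈ C}, 1 * v l i = 0
    simp_rw [one_mul, hv]
    rw [Finset.sum_coe_sort C (fun i => (what i - wbar) l)]
    have : ∀ i, (what i - wbar) l = what i l - wbar l := fun i => rfl
    simp_rw [this]
    rw [Finset.sum_sub_distrib, Finset.sum_const, hwbar]
    have hcard : (C.card : ℝ) ≠ 0 := Nat.cast_ne_zero.mpr (Finset.card_ne_zero_of_mem hCne.choose_spec)
    have : ((C.card : ℝ)⁻¹ • ∑ i' ∈ C, what i') l = (C.card : ℝ)⁻¹ * (∑ i' ∈ C, what i') l := rfl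
    rw [this, esum_apply, nsmul_eq_mul]
    field_simp
    ring
  have hone : (fun _ : {i : Fin n // i ∈ C} => (1:ℝ)) ≠ 0 := by
    intro h
    obtain ⟨i0, hi0⟩ := hCne
    have := congrFun h ⟨i0, hi0⟩
    simpa using this
  have hspec : ∀ l, eigTwo (lapSub A C) * (v l ⬝ᵥ v l) ≤ v l ⬝ᵥ ((lapSub A C) *ᵥ v l) :=
    fun l => spectral_general (lapSub A C) hM hconn _ (v l) hone
      (lapSub_mulVec_one A C hAdiag) (horth l)
  have hdotsq : ∀ l, v l ⬝ᵥ v l = ∑ i : {i : Fin n // i ∈ C}, v l i ^ 2 := by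
    intro l; simp [dotProduct, sq]
  -- step 4
  have step4 : ∑ l, v l ⬝ᵥ ((lapSub A C) *ᵥ v l) =
      (1/2) * ∑ i ∈ C, ∑ j ∈ C, A i j * ‖what i - what j‖ ^ 2 := by
    have hq : ∀ l, v l ⬝ᵥ ((lapSub A C) *ᵥ v l) =
        (1/2) * ∑ i : {i : Fin n // i ∈ C}, ∑ j : {i : Fin n // i ∈ C},
          A i.1 j.1 * (v l i - v l j) ^ 2 := fun l => lapSub_quad A C hAsymm hAdiag (v l)
    simp_rw [hq]
    rw [← Finset.mul_sum]
    congr 1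
    rw [Finset.sum_comm]
    rw [← Finset.sum_coe_sort C (fun i => ∑ j ∈ C, A i j * ‖what i - what j‖ ^ 2)]
    refine Finset.sum_congr rfl fun i _ => ?_
    rw [Finset.sum_comm]
    rw [← Finset.sum_coe_sort C (fun j => A i.1 j * ‖what i.1 - what j‖ ^ 2)]
    refine Finset.sum_congr rfl fun j _ => ?_
    rw [normsq_eq, Finset.mul_sum]
    refine Finset.sum_congr rfl fun l _ => ?_
    have hvd : v l i - v l j = (what i.1 - what j.1) l := by
      show (what i.1 - wbar) l - (what j.1 - wbar) l = _
      have e1 : (what i.1 - wbar) l = what i.1 l - wbar l := rfl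
      have e2 : (what j.1 - wbar) l = what j.1 l - wbar l := rfl
      have e3 : (what i.1 - what j.1) l = what i.1 l - what j.1 l := rfl
      rw [e1, e2, e3]; ring
    rw [hvd]
  calc eigTwo (lapSub A C) * ∑ i ∈ C, ‖what i - wbar‖ ^ 2
      = ∑ l, eigTwo (lapSub A C) * (v l ⬝ᵥ v l) := by
        rw [step1, Finset.mul_sum]
        exact Finset.sum_congr rfl fun l _ => by rw [hdotsq]
    _ ≤ ∑ l, v l ⬝ᵥ ((lapSub A C) *ᵥ v l) := Finset.sum_le_sum fun l _ => hspec l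
    _ = _ := step4

lemma opt_side {n d : ℕ} (A : Matrix (Fin n) (Fin n) ℝ)
    (hAsymm : ∀ i j, A i j = A j i) (hAnonneg : ∀ i j, 0 ≤ A i j)
    (hAdiag : ∀ i, A i i = 0)
    (m : Fin n → ℕ)
    (X : (i : Fin n) → Matrix (Fin (m i)) (Fin d) ℝ)
    (y : (i : Fin n) → EuclideanSpace ℝ (Fin (m i)))
    (α : ℝ) (hα : 0 < α)
    (C : Finset (Fin n))
    (wC : EuclideanSpace ℝ (Fin d))
    (ε : (i : Fin n) → EuclideanSpace ℝ (Fin (m i)))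
    (hy : ∀ i ∈ C, y i = Matrix.toEuclideanLin (X i) wC + ε i)
    (what : Fin n → EuclideanSpace ℝ (Fin d))
    (hmin : ∀ w : Fin n → EuclideanSpace ℝ (Fin d),
      gtvObj A m X y α what ≤ gtvObj A m X y α w)
    (R : ℝ) (hR : R = ⨆ i : {j : Fin n // j ∉ C}, ‖what i.1‖) :
    α * ((1/2) * ∑ i ∈ C, ∑ j ∈ C, A i j * ‖what i - what j‖ ^ 2) ≤
      (∑ i ∈ C, (1 / (m i : ℝ)) * ‖ε i‖ ^ 2) +
        2 * α * (∑ i ∈ C, ∑ j ∈ Cᶜ, A i j) * (‖wC‖ ^ 2 + R ^ 2) := by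
  classical
  set K : ℝ := 2 * (‖wC‖ ^ 2 + R ^ 2) with hK
  have hRj : ∀ j, j ∉ C → ‖what j‖ ≤ R := by
    intro j hj
    rw [hR]
    exact le_ciSup (f := fun i : {j : Fin n // j ∉ C} => ‖what i.1‖)
      (Set.Finite.bddAbove (Set.finite_range _)) ⟨j, hj⟩
  have hmixbd : ∀ i j : Fin n, j ∉ C → ‖wC - what j‖ ^ 2 ≤ K := by
    intro i j hj
    have h1 := norm_sub_le wC (what j)
    have h2 := hRj j hj
    have h3 := norm_nonneg (what j)
    have h4 := norm_nonneg wC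
    have h5 := norm_nonneg (wC - what j)
    rw [hK]
    nlinarith [sq_nonneg (‖wC‖ - ‖what j‖)]
  set w' : Fin n → EuclideanSpace ℝ (Fin d) := fun i => if i ∈ C then wC else what i with hw'
  set P := Finset.univ.filter (fun p : Fin n × Fin n => p.1 < p.2) with hP
  set iteC : Fin n × Fin n → ℝ := fun p =>
    if p.1 ∈ C ∧ p.2 ∈ C then A p.1 p.2 * ‖what p.1 - what p.2‖ ^ 2 else 0 with hiteC
  set iteOut : Fin n × Fin n → ℝ := fun p =>
    if p.1 ∉ C ∧ p.2 ∉ C then A p.1 p.2 * ‖what p.1 - what p.2‖ ^ 2 else 0 with hiteOut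
  set iteMix : Fin n × Fin n → ℝ := fun p =>
    if (p.1 ∈ C ∧ p.2 ∉ C) ∨ (p.1 ∉ C ∧ p.2 ∈ C) then A p.1 p.2 * K else 0 with hiteMix
  -- lower bound on gtvObj what
  have hlow : (∑ i ∈ Cᶜ, (1 / (m i : ℝ)) * ‖y i - Matrix.toEuclideanLin (X i) (what i)‖ ^ 2)
      + α * (∑ p ∈ P, iteC p) + α * (∑ p ∈ P, iteOut p) ≤ gtvObj A m X y α what := by
    rw [gtvObj]
    have hL : ∑ i ∈ Cᶜ, (1 / (m i : ℝ)) * ‖y i - Matrix.toEuclideanLin (X i) (what i)‖ ^ 2 ≤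
        ∑ i, (1 / (m i : ℝ)) * ‖y i - Matrix.toEuclideanLin (X i) (what i)‖ ^ 2 := by
      refine Finset.sum_le_sum_of_subset_of_nonneg (Finset.subset_univ _) fun i _ _ =>
        mul_nonneg (one_div_nonneg.mpr (Nat.cast_nonneg _)) (sq_nonneg _)
    have hS : (∑ p ∈ P, iteC p) + (∑ p ∈ P, iteOut p) ≤
        ∑ p ∈ P, A p.1 p.2 * ‖what p.1 - what p.2‖ ^ 2 := by
      rw [← Finset.sum_add_distrib]
      refine Finset.sum_le_sum fun p _ => ?_
      rw [hiteC, hiteOut]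
      have hnn : 0 ≤ A p.1 p.2 * ‖what p.1 - what p.2‖ ^ 2 :=
        mul_nonneg (hAnonneg _ _) (sq_nonneg _)
      by_cases h1 : p.1 ∈ C <;> by_cases h2 : p.2 ∈ C <;> simp [h1, h2, hnn]
    have := mul_le_mul_of_nonneg_left hS (le_of_lt hα)
    rw [mul_add] at this
    linarith
  -- upper bound on gtvObj w'
  have hup : gtvObj A m X y α w' ≤
      (∑ i ∈ C, (1 / (m i : ℝ)) * ‖ε i‖ ^ 2)
      + (∑ i ∈ Cᶜ, (1 / (m i : ℝ)) * ‖y i - Matrix.toEuclideanLin (X i) (what i)‖ ^ 2)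
      + α * (∑ p ∈ P, iteOut p) + α * (∑ p ∈ P, iteMix p) := by
    rw [gtvObj]
    have hL : ∑ i, (1 / (m i : ℝ)) * ‖y i - Matrix.toEuclideanLin (X i) (w' i)‖ ^ 2 =
        (∑ i ∈ C, (1 / (m i : ℝ)) * ‖ε i‖ ^ 2)
        + ∑ i ∈ Cᶜ, (1 / (m i : ℝ)) * ‖y i - Matrix.toEuclideanLin (X i) (what i)‖ ^ 2 := by
      rw [← Finset.sum_add_sum_compl C
        (fun i => (1 / (m i : ℝ)) * ‖y i - Matrix.toEuclideanLin (X i) (w' i)‖ ^ 2)]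
      congr 1
      · refine Finset.sum_congr rfl fun i hi => ?_
        rw [hw']
        simp only [if_pos hi]
        rw [hy i hi, add_sub_cancel_left]
      · refine Finset.sum_congr rfl fun i hi => ?_
        rw [hw']
        simp only [if_neg (Finset.mem_compl.mp hi)]
    have hS : ∑ p ∈ P, A p.1 p.2 * ‖w' p.1 - w' p.2‖ ^ 2 ≤
        (∑ p ∈ P, iteOut p) + ∑ p ∈ P, iteMix p := by
      rw [← Finset.sum_add_distrib]
      refine Finset.sum_le_sum fun p _ => ?_
      rw [hiteOut, hiteMix, hw']
      by_cases h1 : p.1 ∈ C <;> by_cases h2 : p.2 ∈ C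
      · simp only [if_pos h1, if_pos h2, h1, h2]
        simp [sub_self]
      · simp only [if_pos h1, if_neg h2]
        have : ¬(p.1 ∉ C ∧ p.2 ∉ C) := fun h => h.1 h1
        rw [if_neg this, if_pos (Or.inl ⟨h1, h2⟩), zero_add]
        exact mul_le_mul_of_nonneg_left (hmixbd p.1 p.2 h2) (hAnonneg _ _)
      · simp only [if_neg h1, if_pos h2]
        have : ¬(p.1 ∉ C ∧ p.2 ∉ C) := fun h => h.2 h2
        rw [if_neg this, if_pos (Or.inr ⟨h1, h2⟩), zero_add]
        have hb : ‖what p.1 - wC‖ ^ 2 ≤ K := by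
          rw [← norm_neg, neg_sub]
          exact hmixbd p.2 p.1 h1
        exact mul_le_mul_of_nonneg_left hb (hAnonneg _ _)
      · simp only [if_neg h1, if_neg h2]
        rw [if_pos ⟨h1, h2⟩, if_neg (by tauto), add_zero]
    have := mul_le_mul_of_nonneg_left hS (le_of_lt hα)
    rw [mul_add] at this
    rw [hL]
    linarith
  -- combine with optimality
  have hcomb : α * (∑ p ∈ P, iteC p) ≤
      (∑ i ∈ C, (1 / (m i : ℝ)) * ‖ε i‖ ^ 2) + α * (∑ p ∈ P, iteMix p) := by
    have := hmin w'
    linarith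
  -- identify the sums
  have hand : ∀ (D : Finset (Fin n)) (f : Fin n → Fin n → ℝ),
      (∑ i, ∑ j, if i ∈ C ∧ j ∈ D then f i j else 0) = ∑ i ∈ C, ∑ j ∈ D, f i j := by
    intro D f
    have inner : ∀ i, (∑ j, if i ∈ C ∧ j ∈ D then f i j else 0)
        = if i ∈ C then ∑ j ∈ D, f i j else 0 := by
      intro i
      by_cases hi : i ∈ C
      · simp only [hi, true_and, if_pos]
        rw [Finset.sum_ite_mem, Finset.univ_inter]
      · simp [hi]
    simp_rw [inner]
    rw [Finset.sum_ite_mem, Finset.univ_inter]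
  have hCsum : ∑ p ∈ P, iteC p = (1/2) * ∑ i ∈ C, ∑ j ∈ C, A i j * ‖what i - what j‖ ^ 2 := by
    rw [hP, half_sum (fun i j => iteC (i, j))
      (fun i j => by
        simp only [hiteC]
        rw [hAsymm i j, norm_sub_rev]
        exact if_congr and_comm rfl rfl)
      (fun i => by rw [hiteC]; simp [hAdiag, sub_self])]
    congr 1
    exact hand C (fun i j => A i j * ‖what i - what j‖ ^ 2)
  have hMsum : ∑ p ∈ P, iteMix p = (∑ i ∈ C, ∑ j ∈ Cᶜ, A i j) * K := by
    rw [hP, half_sum (fun i j => iteMix (i, j))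
      (fun i j => by
        simp only [hiteMix]
        rw [hAsymm i j]
        exact if_congr (by tauto) rfl rfl)
      (fun i => by rw [hiteMix]; simp [hAdiag])]
    have hsplit : ∀ i j : Fin n, iteMix (i, j) =
        (if i ∈ C ∧ j ∉ C then A i j * K else 0) + (if i ∉ C ∧ j ∈ C then A i j * K else 0) := by
      intro i j
      rw [hiteMix]
      by_cases h1 : i ∈ C <;> by_cases h2 : j ∈ C <;> simp [h1, h2]
    have hone : (∑ i, ∑ j, if i ∈ C ∧ j ∉ C then A i j * K else 0)
        = ∑ i ∈ C, ∑ j ∈ Cᶜ, A i j * K := by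
      have : ∀ (i j : Fin n), (if i ∈ C ∧ j ∉ C then A i j * K else 0)
          = if i ∈ C ∧ j ∈ Cᶜ then A i j * K else 0 := by
        intro i j
        exact if_congr (by rw [Finset.mem_compl]) rfl rfl
      simp_rw [this]
      exact hand Cᶜ (fun i j => A i j * K)
    have htwo : (∑ i, ∑ j, if i ∉ C ∧ j ∈ C then A i j * K else 0)
        = ∑ i, ∑ j, if i ∈ C ∧ j ∉ C then A i j * K else 0 := by
      rw [Finset.sum_comm]
      refine Finset.sum_congr rfl fun i _ => Finset.sum_congr rfl fun j _ => ?_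
      rw [hAsymm j i]
      exact if_congr and_comm rfl rfl
    simp_rw [hsplit, Finset.sum_add_distrib, htwo, hone]
    have hfact : ∑ i ∈ C, ∑ j ∈ Cᶜ, A i j * K = (∑ i ∈ C, ∑ j ∈ Cᶜ, A i j) * K := by
      rw [Finset.sum_mul]
      exact Finset.sum_congr rfl fun i _ => by rw [Finset.sum_mul]
    rw [hfact]
    ring
  rw [hCsum, hMsum] at hcomb
  rw [hK] at hcomb
  linarith

/-- Clustered GTVMin bound: if the datasets in a nonempty cluster `C` share a
common parameter vector `w̄^{(C)}` and the induced subgraph on `C` is connected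
(`λ₂(L_C) > 0`), then the deviations of the GTVMin solution from its cluster-average satisfy
`∑_{i∈C} ‖w̃⁽ⁱ⁾‖₂² ≤ (1/(α λ₂(L_C))) [∑_{i∈C}(1/mᵢ)‖ε⁽ⁱ⁾‖₂² + 2 α b(C)(‖w̄^{(C)}‖₂² + R²)]`. -/
theorem gtvmin_clustered_bound
    {n d : ℕ} (A : Matrix (Fin n) (Fin n) ℝ)
    (hAsymm : ∀ i j, A i j = A j i) (hAnonneg : ∀ i j, 0 ≤ A i j)
    (hAdiag : ∀ i, A i i = 0)
    (m : Fin n → ℕ)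
    (X : (i : Fin n) → Matrix (Fin (m i)) (Fin d) ℝ)
    (y : (i : Fin n) → EuclideanSpace ℝ (Fin (m i)))
    (α : ℝ) (hα : 0 < α)
    (C : Finset (Fin n)) (hCne : C.Nonempty)
    (wC : EuclideanSpace ℝ (Fin d))
    (ε : (i : Fin n) → EuclideanSpace ℝ (Fin (m i)))
    (hy : ∀ i ∈ C, y i = Matrix.toEuclideanLin (X i) wC + ε i)
    (what : Fin n → EuclideanSpace ℝ (Fin d))
    (hmin : ∀ w : Fin n → EuclideanSpace ℝ (Fin d),
      gtvObj A m X y α what ≤ gtvObj A m X y α w)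
    (hconn : 0 < eigTwo (lapSub A C))
    (R : ℝ) (hR : R = ⨆ i : {j : Fin n // j ∉ C}, ‖what i.1‖) :
    ∑ i ∈ C, ‖what i - (C.card : ℝ)⁻¹ • ∑ i' ∈ C, what i'‖ ^ 2 ≤
      1 / (α * eigTwo (lapSub A C)) *
        ((∑ i ∈ C, (1 / (m i : ℝ)) * ‖ε i‖ ^ 2) +
          2 * α * (∑ i ∈ C, ∑ j ∈ Cᶜ, A i j) * (‖wC‖ ^ 2 + R ^ 2)) := by
  have h1 := spectral_side A hAsymm hAdiag C hCne what hconn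
  have h2 := opt_side A hAsymm hAnonneg hAdiag m X y α hα C wC ε hy what hmin R hR
  have hpos : 0 < α * eigTwo (lapSub A C) := mul_pos hα hconn
  rw [one_div, inv_mul_eq_div, le_div_iff₀ hpos]
  nlinarith [mul_le_mul_of_nonneg_left h1 hα.le]
end
end
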